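/- arXiv:1205.1424 — 2 statements merged into one kernel-verified Lean document; each statement's English description precedes it below -/
import Mathlib

section
/- For two density operators ρ₀ and ρ₁ on a finite-dimensional Hilbert space, the maximum of |⟨Γ₀|Γ₁⟩|² over all purifications |Γ₀⟩ of ρ₀ and |Γ₁⟩ of ρ₁ (on a common purifying system) equals the fidelity F(ρ₀,ρ₁) = (Tr √(√ρ₀ ρ₁ √ρ₀))². -/
open Matrix Complex Finset
open scoped ComplexInnerProductSpace
open scoped ComplexOrder
noncomputable section
/-- The inner product `⟨v|w⟩`. -/
def ovlp {ι : Type*} [Fintype ι] (v w : ι → ℂ) : ℂ := ∑ x, star (v x) * w x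

/-- `Γ` is a purification of `ρ` (unit vector whose partial trace over `K` is `ρ`). -/
def Purifies {n : ℕ} {K : Type*} [Fintype K] (Γ : Fin n × K → ℂ)
    (ρ : Matrix (Fin n) (Fin n) ℂ) : Prop :=
  (∑ x, ‖Γ x‖ ^ 2 = 1) ∧ ∀ i j, ρ i j = ∑ k, Γ (i, k) * star (Γ (j, k))

namespace Matrix.PosSemidef

/-- The positive semidefinite square root of a positive semidefinite matrix
(the definition Mathlib had in December 2024, since removed). -/
def sqrt {n 𝕜 : Type*} [Fintype n] [RCLike 𝕜] [DecidableEq n] {A : Matrix n n 𝕜}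
    (hA : PosSemidef A) : Matrix n n 𝕜 :=
  hA.1.eigenvectorUnitary.1 * diagonal ((↑) ∘ (√·) ∘ hA.1.eigenvalues) *
  (star hA.1.eigenvectorUnitary : Matrix n n 𝕜)

lemma posSemidef_sqrt {n 𝕜 : Type*} [Fintype n] [RCLike 𝕜] [DecidableEq n] {A : Matrix n n 𝕜}
    (hA : PosSemidef A) : PosSemidef hA.sqrt := by
  have hd : (diagonal ((↑) ∘ (√·) ∘ hA.1.eigenvalues : n → 𝕜)).PosSemidef :=
    posSemidef_diagonal_iff.2 (fun i => by
      simp only [Function.comp_apply]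
      exact RCLike.ofReal_nonneg.2 (Real.sqrt_nonneg _))
  have h := hd.mul_mul_conjTranspose_same (hA.1.eigenvectorUnitary : Matrix n n 𝕜)
  unfold sqrt
  rwa [Matrix.star_eq_conjTranspose]

end Matrix.PosSemidef

/-- The fidelity `F(ρ₀,ρ₁) = (Tr √(√ρ₀ ρ₁ √ρ₀))²`. -/
def fidelity {n : ℕ} (ρ₀ ρ₁ : Matrix (Fin n) (Fin n) ℂ)
    (h₀ : ρ₀.PosSemidef) (h₁ : ρ₁.PosSemidef) : ℝ :=
  ((show (h₀.sqrt * ρ₁ * h₀.sqrt).PosSemidef by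
      have h := h₁.mul_mul_conjTranspose_same h₀.sqrt
      rwa [h₀.posSemidef_sqrt.1] at h).sqrt.trace).re ^ 2

namespace Uhl
variable {n : ℕ} {A : Matrix (Fin n) (Fin n) ℂ}

def matFun (hA : A.IsHermitian) (f : ℝ → ℝ) : Matrix (Fin n) (Fin n) ℂ :=
  (hA.eigenvectorUnitary : Matrix (Fin n) (Fin n) ℂ) *
    diagonal (fun i => (f (hA.eigenvalues i) : ℂ)) *
    (star (hA.eigenvectorUnitary : Matrix (Fin n) (Fin n) ℂ))

lemma matFun_mul (hA : A.IsHermitian) (f g : ℝ → ℝ) :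
    matFun hA f * matFun hA g = matFun hA (fun x => f x * g x) := by
  have hU : (star (hA.eigenvectorUnitary : Matrix (Fin n) (Fin n) ℂ)) *
      (hA.eigenvectorUnitary : Matrix (Fin n) (Fin n) ℂ) = 1 := Unitary.coe_star_mul_self _
  unfold matFun
  calc (↑hA.eigenvectorUnitary * diagonal (fun i => (f (hA.eigenvalues i) : ℂ)) * star ↑hA.eigenvectorUnitary) *
      (↑hA.eigenvectorUnitary * diagonal (fun i => (g (hA.eigenvalues i) : ℂ)) * star ↑hA.eigenvectorUnitary)
      = ↑hA.eigenvectorUnitary * diagonal (fun i => (f (hA.eigenvalues i) : ℂ)) *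
        ((star ↑hA.eigenvectorUnitary * ↑hA.eigenvectorUnitary) * diagonal (fun i => (g (hA.eigenvalues i) : ℂ))) * star ↑hA.eigenvectorUnitary := by
        simp only [mul_assoc]
    _ = ↑hA.eigenvectorUnitary * (diagonal (fun i => (f (hA.eigenvalues i) : ℂ)) * diagonal (fun i => (g (hA.eigenvalues i) : ℂ))) * star ↑hA.eigenvectorUnitary := by
        rw [hU, one_mul]; simp only [mul_assoc]
    _ = _ := by rw [diagonal_mul_diagonal]; push_cast; rfl

lemma matFun_id (hA : A.IsHermitian) : matFun hA (fun x => x) = A := by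
  conv_rhs => rw [hA.spectral_theorem]
  rfl

lemma matFun_congr (hA : A.IsHermitian) {f g : ℝ → ℝ}
    (h : ∀ i, f (hA.eigenvalues i) = g (hA.eigenvalues i)) : matFun hA f = matFun hA g := by
  unfold matFun
  congr 2
  exact congrArg _ (funext fun i => by rw [h i])

lemma _root_.Matrix.PosSemidef.sqrt_mul_self {A : Matrix (Fin n) (Fin n) ℂ} (hA : A.PosSemidef) :
    hA.sqrt * hA.sqrt = A := by
  show matFun hA.1 Real.sqrt * matFun hA.1 Real.sqrt = A
  rw [matFun_mul]
  exact (matFun_congr hA.1 fun i => Real.mul_self_sqrt (hA.eigenvalues_nonneg i)).trans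
    (matFun_id hA.1)

lemma matFun_one (hA : A.IsHermitian) : matFun hA (fun _ => 1) = 1 := by
  unfold matFun
  simp only [Complex.ofReal_one, diagonal_one, mul_one]
  exact Unitary.coe_mul_star_self _

lemma matFun_sub (hA : A.IsHermitian) (f g : ℝ → ℝ) :
    matFun hA (fun x => f x - g x) = matFun hA f - matFun hA g := by
  unfold matFun
  simp only [Complex.ofReal_sub]
  rw [← diagonal_sub, Matrix.mul_sub, Matrix.sub_mul]

lemma matFun_zero (hA : A.IsHermitian) : matFun hA (fun _ => 0) = 0 := by
  unfold matFun
  simp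

lemma matFun_isHermitian (hA : A.IsHermitian) (f : ℝ → ℝ) : (matFun hA f).IsHermitian := by
  unfold matFun IsHermitian
  rw [conjTranspose_mul, conjTranspose_mul, diagonal_conjTranspose, star_eq_conjTranspose,
    conjTranspose_conjTranspose, mul_assoc]
  congr 2
  funext i
  simp [Pi.star_def, Complex.star_def, Complex.conj_ofReal]

lemma matFun_posSemidef (hA : A.IsHermitian) {f : ℝ → ℝ} (hf : ∀ x, 0 ≤ f x) :
    (matFun hA f).PosSemidef := by
  unfold matFun
  exact (PosSemidef.diagonal (fun i => by
    simpa using Complex.zero_le_real.mpr (hf _))).mul_mul_conjTranspose_same _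

lemma matFun_trace (hA : A.IsHermitian) (f : ℝ → ℝ) :
    (matFun hA f).trace = ∑ i, (f (hA.eigenvalues i) : ℂ) := by
  unfold matFun
  rw [trace_mul_cycle, Unitary.coe_star_mul_self, one_mul, trace_diagonal]


variable {n m : ℕ}

lemma trace_nonneg {M : Matrix (Fin n) (Fin n) ℂ} (hM : M.PosSemidef) : 0 ≤ M.trace := by
  exact hM.trace_nonneg

lemma re_nonneg_of_nonneg {z : ℂ} (h : 0 ≤ z) : 0 ≤ z.re := by
  have := (Complex.le_def.mp h).1
  simpa using this

lemma norm_of_nonneg' {z : ℂ} (h : 0 ≤ z) : ‖z‖ = z.re := by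
  rcases Complex.le_def.mp h with ⟨h1, h2⟩
  have hz : z = (z.re : ℂ) := by apply Complex.ext <;> simp [← h2]
  conv_lhs => rw [hz]
  rw [Complex.norm_real, Real.norm_of_nonneg (by simpa using h1)]

lemma trace_mul_psd_nonneg {A B : Matrix (Fin n) (Fin n) ℂ} (hA : A.PosSemidef)
    (hB : B.PosSemidef) : 0 ≤ (A * B).trace := by
  have h1 : (A * B).trace = (hA.sqrt * B * hA.sqrt).trace := by
    conv_lhs => rw [← hA.sqrt_mul_self]
    rw [mul_assoc, trace_mul_comm]
  rw [h1]
  apply trace_nonneg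
  have := hB.mul_mul_conjTranspose_same hA.sqrt
  rwa [hA.posSemidef_sqrt.1] at this

def toEuc (Z : Matrix (Fin n) (Fin m) ℂ) : EuclideanSpace ℂ (Fin n × Fin m) :=
  WithLp.toLp 2 (fun p : Fin n × Fin m => Z p.1 p.2)

lemma trace_CS (X Y : Matrix (Fin n) (Fin m) ℂ) :
    ‖(Xᴴ * Y).trace‖ ^ 2 ≤ (Xᴴ * X).trace.re * (Yᴴ * Y).trace.re := by
  let u := toEuc X
  let v := toEuc Y
  have key : ∀ Z W : Matrix (Fin n) (Fin m) ℂ,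
      inner ℂ (toEuc Z) (toEuc W) = (Zᴴ * W).trace := by
    intro Z W
    simp only [toEuc, PiLp.inner_apply, RCLike.inner_apply', PiLp.toLp_apply, Matrix.trace, Matrix.diag,
      Matrix.mul_apply, Matrix.conjTranspose_apply]
    rw [Fintype.sum_prod_type, Finset.sum_comm]
    rfl
  have h1 := norm_inner_le_norm (𝕜 := ℂ) u v
  have h2 : ‖u‖ ^ 2 = (Xᴴ * X).trace.re := by
    rw [← inner_self_eq_norm_sq (𝕜 := ℂ), show inner ℂ u u = _ from key X X]
    simp
  have h3 : ‖v‖ ^ 2 = (Yᴴ * Y).trace.re := by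
    rw [← inner_self_eq_norm_sq (𝕜 := ℂ), show inner ℂ v v = _ from key Y Y]
    simp
  calc ‖(Xᴴ * Y).trace‖ ^ 2 = ‖inner ℂ u v‖ ^ 2 := by
        rw [show inner ℂ u v = _ from key X Y]
    _ ≤ (‖u‖ * ‖v‖) ^ 2 := by apply pow_le_pow_left₀ (norm_nonneg _) h1
    _ = (Xᴴ * X).trace.re * (Yᴴ * Y).trace.re := by rw [mul_pow, h2, h3]



variable {n m : ℕ}

def sqF : ℝ → ℝ := Real.sqrt
def indF : ℝ → ℝ := fun x => if x = 0 then 0 else 1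
def isqF : ℝ → ℝ := fun x => if x = 0 then 0 else (Real.sqrt x)⁻¹
def qF : ℝ → ℝ := fun x => Real.sqrt (Real.sqrt x)

lemma sqF_nonneg (x : ℝ) : 0 ≤ sqF x := Real.sqrt_nonneg x
lemma indF_nonneg (x : ℝ) : 0 ≤ indF x := by unfold indF; split <;> norm_num
lemma isqF_nonneg (x : ℝ) : 0 ≤ isqF x := by
  unfold isqF; split
  · exact le_refl 0
  · exact inv_nonneg.mpr (Real.sqrt_nonneg _)
lemma qF_nonneg (x : ℝ) : 0 ≤ qF x := Real.sqrt_nonneg _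
lemma one_sub_indF_nonneg (x : ℝ) : 0 ≤ 1 - indF x := by unfold indF; split <;> norm_num

variable {ρ : Matrix (Fin n) (Fin n) ℂ} (hρ : ρ.PosSemidef)

lemma matFun_mul_base_mul (f g : ℝ → ℝ) :
    matFun hρ.1 f * ρ * matFun hρ.1 g = matFun hρ.1 (fun x => f x * x * g x) := by
  have : matFun hρ.1 (fun x => f x * x * g x)
      = matFun hρ.1 f * ρ * matFun hρ.1 g := by
    rw [← matFun_mul hρ.1 (fun x => f x * x) g, ← matFun_mul hρ.1 f (fun x => x),
      matFun_id hρ.1]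
  exact this.symm

lemma matFun_sqF_eq_sqrt : matFun hρ.1 sqF = hρ.sqrt := by
  rfl

lemma proj_mul_eq_self (A : Matrix (Fin n) (Fin m) ℂ) (hA : A * Aᴴ = ρ) :
    matFun hρ.1 indF * A = A := by
  have hJfun : (1 : Matrix (Fin n) (Fin n) ℂ) - matFun hρ.1 indF
      = matFun hρ.1 (fun x => 1 - indF x) := by
    rw [matFun_sub hρ.1, matFun_one hρ.1]
  have hJh : ((1 : Matrix (Fin n) (Fin n) ℂ) - matFun hρ.1 indF)ᴴ
      = 1 - matFun hρ.1 indF := by rw [hJfun]; exact (matFun_isHermitian hρ.1 _).eq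
  have hzero : (1 - matFun hρ.1 indF) * ρ * (1 - matFun hρ.1 indF) = 0 := by
    rw [hJfun, matFun_mul_base_mul hρ]
    refine (matFun_congr hρ.1 fun i => ?_).trans (matFun_zero hρ.1)
    by_cases h : hρ.1.eigenvalues i = 0 <;> simp [indF, h]
  have h2 : ((1 - matFun hρ.1 indF) * A) * ((1 - matFun hρ.1 indF) * A)ᴴ = 0 := by
    rw [conjTranspose_mul, hJh,
      show (1 - matFun hρ.1 indF) * A * (Aᴴ * (1 - matFun hρ.1 indF))
        = (1 - matFun hρ.1 indF) * (A * Aᴴ) * (1 - matFun hρ.1 indF) by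
          simp only [Matrix.mul_assoc], hA, hzero]
  have h3 := Matrix.self_mul_conjTranspose_eq_zero.mp h2
  rw [Matrix.sub_mul, Matrix.one_mul] at h3
  exact (sub_eq_zero.mp h3).symm

lemma isq_factor_proj (A : Matrix (Fin n) (Fin m) ℂ) (hA : A * Aᴴ = ρ) :
    (matFun hρ.1 isqF * A) * (matFun hρ.1 isqF * A)ᴴ = matFun hρ.1 indF := by
  rw [conjTranspose_mul, (matFun_isHermitian hρ.1 isqF).eq,
    show matFun hρ.1 isqF * A * (Aᴴ * matFun hρ.1 isqF)
      = matFun hρ.1 isqF * (A * Aᴴ) * matFun hρ.1 isqF by simp only [Matrix.mul_assoc],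
    hA, matFun_mul_base_mul hρ]
  refine matFun_congr hρ.1 fun i => ?_
  have h := hρ.eigenvalues_nonneg i
  by_cases hx : hρ.1.eigenvalues i = 0
  · simp [isqF, indF, hx]
  · have hs : Real.sqrt (hρ.1.eigenvalues i) ≠ 0 :=
      Real.sqrt_ne_zero'.mpr (lt_of_le_of_ne h (Ne.symm hx))
    have hval : Real.sqrt (hρ.1.eigenvalues i) * Real.sqrt (hρ.1.eigenvalues i)
        = hρ.1.eigenvalues i := Real.mul_self_sqrt h
    simp only [isqF, indF, if_neg hx]
    field_simp
    rw [Real.sq_sqrt h]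

lemma sq_isq_recon (A : Matrix (Fin n) (Fin m) ℂ) (hA : A * Aᴴ = ρ) :
    matFun hρ.1 sqF * (matFun hρ.1 isqF * A) = A := by
  rw [← Matrix.mul_assoc, matFun_mul]
  have heq : matFun hρ.1 (fun x => sqF x * isqF x) = matFun hρ.1 indF := by
    refine matFun_congr hρ.1 fun i => ?_
    have h := hρ.eigenvalues_nonneg i
    by_cases hx : hρ.1.eigenvalues i = 0
    · simp [sqF, isqF, indF, hx]
    · have hs : Real.sqrt (hρ.1.eigenvalues i) ≠ 0 :=
        Real.sqrt_ne_zero'.mpr (lt_of_le_of_ne h (Ne.symm hx))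
      simp [sqF, isqF, indF, hx, mul_inv_cancel₀ hs]
  rw [heq]
  exact proj_mul_eq_self hρ A hA


-- extra matFun consequences (same section variables: hρ)
lemma one_sub_ind_psd : ((1 : Matrix (Fin n) (Fin n) ℂ) - matFun hρ.1 indF).PosSemidef := by
  rw [show (1 : Matrix (Fin n) (Fin n) ℂ) - matFun hρ.1 indF
      = matFun hρ.1 (fun x => 1 - indF x) by rw [matFun_sub hρ.1, matFun_one hρ.1]]
  exact matFun_posSemidef hρ.1 one_sub_indF_nonneg

lemma sq_mul_ind : matFun hρ.1 sqF * matFun hρ.1 indF = matFun hρ.1 sqF := by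
  rw [matFun_mul]
  refine matFun_congr hρ.1 fun i => ?_
  by_cases hx : hρ.1.eigenvalues i = 0 <;> simp [sqF, indF, hx]

lemma q_mul_q : matFun hρ.1 qF * matFun hρ.1 qF = matFun hρ.1 sqF := by
  rw [matFun_mul]
  exact matFun_congr hρ.1 fun i => Real.mul_self_sqrt (Real.sqrt_nonneg _)

lemma base_mul_isq : ρ * matFun hρ.1 isqF = matFun hρ.1 sqF := by
  calc ρ * matFun hρ.1 isqF = matFun hρ.1 (fun x => x) * matFun hρ.1 isqF := by
        rw [matFun_id]
    _ = matFun hρ.1 (fun x => x * isqF x) := matFun_mul hρ.1 _ _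
    _ = matFun hρ.1 sqF := by
        refine matFun_congr hρ.1 fun i => ?_
        have h := hρ.eigenvalues_nonneg i
        by_cases hx : hρ.1.eigenvalues i = 0
        · simp [sqF, isqF, hx]
        · have hs : Real.sqrt (hρ.1.eigenvalues i) ≠ 0 :=
            Real.sqrt_ne_zero'.mpr (lt_of_le_of_ne h (Ne.symm hx))
          have hval : Real.sqrt (hρ.1.eigenvalues i) * Real.sqrt (hρ.1.eigenvalues i)
              = hρ.1.eigenvalues i := Real.mul_self_sqrt h
          simp only [isqF, sqF, if_neg hx]
          field_simp
          rw [Real.sq_sqrt h]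

-- bridging lemmas
variable {n m : ℕ}

lemma mul_star_self' (z : ℂ) : z * star z = ((‖z‖ ^ 2 : ℝ) : ℂ) := by
  rw [show star z = starRingEnd ℂ z from rfl, Complex.mul_conj, Complex.normSq_eq_norm_sq]

lemma purifies_of (B : Matrix (Fin n) (Fin m) ℂ) {ρ : Matrix (Fin n) (Fin n) ℂ}
    (h : B * Bᴴ = ρ) (ht : ρ.trace = 1) : Purifies (fun x => B x.1 x.2) ρ := by
  constructor
  · have htr : ρ.trace = ((∑ x : Fin n × Fin m, ‖B x.1 x.2‖ ^ 2 : ℝ) : ℂ) := by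
      rw [← h]
      calc (B * Bᴴ).trace = ∑ i, ∑ k, B i k * star (B i k) := by
            simp only [Matrix.trace, Matrix.diag, Matrix.mul_apply, Matrix.conjTranspose_apply]
        _ = ∑ i, ∑ k, ((‖B i k‖ ^ 2 : ℝ) : ℂ) := by
            exact Finset.sum_congr rfl fun i _ => Finset.sum_congr rfl fun k _ =>
              mul_star_self' _
        _ = ((∑ x : Fin n × Fin m, ‖B x.1 x.2‖ ^ 2 : ℝ) : ℂ) := by
            rw [Fintype.sum_prod_type]
            push_cast
            rfl
    rw [ht] at htr
    exact_mod_cast htr.symm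
  · intro i j
    rw [← h]
    simp [Matrix.mul_apply, Matrix.conjTranspose_apply]

lemma factor_of_purifies {K : Type*} [Fintype K] {Γ : Fin n × K → ℂ}
    {ρ : Matrix (Fin n) (Fin n) ℂ} (hp : Purifies Γ ρ) :
    (Matrix.of fun i k => Γ (i, k)) * (Matrix.of fun i k => Γ (i, k))ᴴ = ρ := by
  ext i j
  rw [hp.2 i j]
  simp only [Matrix.mul_apply, Matrix.conjTranspose_apply, Matrix.of_apply]

lemma ovlp_eq (B₀ B₁ : Matrix (Fin n) (Fin m) ℂ) :
    ovlp (fun x : Fin n × Fin m => B₀ x.1 x.2) (fun x : Fin n × Fin m => B₁ x.1 x.2)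
      = (B₀ᴴ * B₁).trace := by
  unfold ovlp
  simp only [Matrix.trace, Matrix.diag, Matrix.mul_apply, Matrix.conjTranspose_apply]
  rw [Fintype.sum_prod_type, Finset.sum_comm]

-- the upper bound
lemma trace_conj_form {n m : ℕ} (q : Matrix (Fin n) (Fin n) ℂ) (hq : qᴴ = q)
    (Z : Matrix (Fin n) (Fin m) ℂ) :
    ((q * Z)ᴴ * (q * Z)).trace = ((q * q) * (Z * Zᴴ)).trace := by
  rw [conjTranspose_mul, hq, trace_mul_comm,
    show (q * Z) * (Zᴴ * q) = (q * (Z * Zᴴ)) * q by simp only [Matrix.mul_assoc],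
    trace_mul_comm, ← Matrix.mul_assoc]

lemma assoc_helper {n m : ℕ} (q p w : Matrix (Fin n) (Fin n) ℂ)
    (w₀ w₁ : Matrix (Fin n) (Fin m) ℂ) (hq : qᴴ = q) (hqq : q * q = p) :
    w₀ᴴ * ((p * w) * w₁) = (q * w₀)ᴴ * (q * (w * w₁)) := by
  rw [conjTranspose_mul, hq, ← hqq]
  simp only [Matrix.mul_assoc]

lemma upper {n m : ℕ} {ρ₀ ρ₁ : Matrix (Fin n) (Fin n) ℂ}
    (h₀ : ρ₀.PosSemidef) (h₁ : ρ₁.PosSemidef)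
    (hM : (h₀.sqrt * ρ₁ * h₀.sqrt).PosSemidef)
    (A₀ A₁ : Matrix (Fin n) (Fin m) ℂ)
    (hA₀ : A₀ * A₀ᴴ = ρ₀) (hA₁ : A₁ * A₁ᴴ = ρ₁) :
    ‖(A₀ᴴ * A₁).trace‖ ^ 2 ≤ hM.sqrt.trace.re ^ 2 := by
  have hNfac : (h₀.sqrt * h₁.sqrt) * (h₀.sqrt * h₁.sqrt)ᴴ = h₀.sqrt * ρ₁ * h₀.sqrt := by
    rw [conjTranspose_mul, h₀.posSemidef_sqrt.1.eq, h₁.posSemidef_sqrt.1.eq,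
      show h₀.sqrt * h₁.sqrt * (h₁.sqrt * h₀.sqrt)
        = h₀.sqrt * (h₁.sqrt * h₁.sqrt) * h₀.sqrt by simp only [Matrix.mul_assoc],
      h₁.sqrt_mul_self]
  -- names
  set N := h₀.sqrt * h₁.sqrt with hN
  set P := matFun hM.1 sqF with hP
  set qP := matFun hM.1 qF with hqP
  set W := matFun hM.1 isqF * N with hW
  set W₀ := matFun h₀.1 isqF * A₀ with hW₀
  set W₁ := matFun h₁.1 isqF * A₁ with hW₁
  have hrecon0 : matFun h₀.1 sqF * W₀ = A₀ := sq_isq_recon h₀ A₀ hA₀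
  have hrecon1 : matFun h₁.1 sqF * W₁ = A₁ := sq_isq_recon h₁ A₁ hA₁
  have hreconN : P * W = N := sq_isq_recon hM N hNfac
  have hqq : qP * qP = P := q_mul_q hM
  have hW₀W₀ : W₀ * W₀ᴴ = matFun h₀.1 indF := isq_factor_proj h₀ A₀ hA₀
  have hW₁W₁ : W₁ * W₁ᴴ = matFun h₁.1 indF := isq_factor_proj h₁ A₁ hA₁
  have hWW : W * Wᴴ = matFun hM.1 indF := isq_factor_proj hM N hNfac
  have hkey : A₀ᴴ * A₁ = (qP * W₀)ᴴ * (qP * (W * W₁)) := by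
    calc A₀ᴴ * A₁ = (matFun h₀.1 sqF * W₀)ᴴ * (matFun h₁.1 sqF * W₁) := by
          rw [hrecon0, hrecon1]
      _ = W₀ᴴ * ((matFun h₀.1 sqF * matFun h₁.1 sqF) * W₁) := by
          rw [conjTranspose_mul, (matFun_isHermitian h₀.1 sqF).eq]
          simp only [Matrix.mul_assoc]
      _ = W₀ᴴ * ((P * W) * W₁) := by
          rw [matFun_sqF_eq_sqrt h₀, matFun_sqF_eq_sqrt h₁, ← hN, ← hreconN]
      _ = (qP * W₀)ᴴ * (qP * (W * W₁)) :=
          assoc_helper qP P W W₀ W₁ (matFun_isHermitian hM.1 qF).eq hqq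
  have tx : ((qP * W₀)ᴴ * (qP * W₀)).trace = (P * matFun h₀.1 indF).trace := by
    rw [trace_conj_form qP (matFun_isHermitian hM.1 qF).eq, hqq, hW₀W₀]
  have ty : ((qP * (W * W₁))ᴴ * (qP * (W * W₁))).trace
      = (P * (W * matFun h₁.1 indF * Wᴴ)).trace := by
    rw [trace_conj_form qP (matFun_isHermitian hM.1 qF).eq, hqq,
      show (W * W₁) * (W * W₁)ᴴ = W * (W₁ * W₁ᴴ) * Wᴴ by
        rw [conjTranspose_mul]; simp only [Matrix.mul_assoc],
      hW₁W₁]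
  -- psd facts
  have hPpsd : P.PosSemidef := matFun_posSemidef hM.1 sqF_nonneg
  have hPi0 : (matFun h₀.1 indF).PosSemidef := matFun_posSemidef h₀.1 indF_nonneg
  have hPi1 : (matFun h₁.1 indF).PosSemidef := matFun_posSemidef h₁.1 indF_nonneg
  have h1Pi0 : ((1 : Matrix (Fin n) (Fin n) ℂ) - matFun h₀.1 indF).PosSemidef :=
    one_sub_ind_psd h₀
  have h1Pi1 : ((1 : Matrix (Fin n) (Fin n) ℂ) - matFun h₁.1 indF).PosSemidef :=
    one_sub_ind_psd h₁
  have hc : 0 ≤ P.trace.re := re_nonneg_of_nonneg (trace_nonneg hPpsd)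
  -- bound 1
  have b1a : (P * matFun h₀.1 indF).trace.re ≤ P.trace.re := by
    have hsplit : P.trace = (P * matFun h₀.1 indF).trace
        + (P * (1 - matFun h₀.1 indF)).trace := by
      rw [Matrix.mul_sub, Matrix.mul_one, Matrix.trace_sub]
      ring
    have hpos := re_nonneg_of_nonneg
      (trace_mul_psd_nonneg hPpsd h1Pi0)
    rw [hsplit, Complex.add_re]
    linarith
  have b1b : 0 ≤ (P * matFun h₀.1 indF).trace.re :=
    re_nonneg_of_nonneg (trace_mul_psd_nonneg hPpsd hPi0)
  -- bound 2
  have hWWpsd : (W * matFun h₁.1 indF * Wᴴ).PosSemidef := hPi1.mul_mul_conjTranspose_same W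
  have b2b : 0 ≤ (P * (W * matFun h₁.1 indF * Wᴴ)).trace.re :=
    re_nonneg_of_nonneg (trace_mul_psd_nonneg hPpsd hWWpsd)
  have b2a : (P * (W * matFun h₁.1 indF * Wᴴ)).trace.re ≤ P.trace.re := by
    have hsplit : (P * (W * Wᴴ)).trace = (P * (W * matFun h₁.1 indF * Wᴴ)).trace
        + (P * (W * (1 - matFun h₁.1 indF) * Wᴴ)).trace := by
      rw [show W * (1 - matFun h₁.1 indF) * Wᴴ = W * Wᴴ - W * matFun h₁.1 indF * Wᴴ by
        rw [Matrix.mul_sub, Matrix.mul_one, Matrix.sub_mul], Matrix.mul_sub, Matrix.trace_sub]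
      ring
    have hpos := re_nonneg_of_nonneg
      (trace_mul_psd_nonneg hPpsd (h1Pi1.mul_mul_conjTranspose_same W))
    have hPP : (P * (W * Wᴴ)).trace = P.trace := by
      rw [hWW, show P * matFun hM.1 indF = P from by rw [hP]; exact sq_mul_ind hM]
    rw [← hPP, hsplit, Complex.add_re]
    linarith
  -- combine
  calc ‖(A₀ᴴ * A₁).trace‖ ^ 2 = ‖((qP * W₀)ᴴ * (qP * (W * W₁))).trace‖ ^ 2 := by rw [hkey]
    _ ≤ ((qP * W₀)ᴴ * (qP * W₀)).trace.re
        * ((qP * (W * W₁))ᴴ * (qP * (W * W₁))).trace.re := trace_CS _ _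
    _ = (P * matFun h₀.1 indF).trace.re * (P * (W * matFun h₁.1 indF * Wᴴ)).trace.re := by
        rw [tx, ty]
    _ ≤ P.trace.re * P.trace.re := mul_le_mul b1a b2a b2b hc
    _ = hM.sqrt.trace.re ^ 2 := by rw [hP, matFun_sqF_eq_sqrt hM]; ring

lemma witness {n : ℕ} {ρ₀ ρ₁ : Matrix (Fin n) (Fin n) ℂ}
    (h₀ : ρ₀.PosSemidef) (h₁ : ρ₁.PosSemidef)
    (hM : (h₀.sqrt * ρ₁ * h₀.sqrt).PosSemidef) :
    ∃ (C₀ C₁ : Matrix (Fin n) (Fin (n + n)) ℂ),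
      C₀ * C₀ᴴ = ρ₀ ∧ C₁ * C₁ᴴ = ρ₁ ∧ (C₀ᴴ * C₁).trace = hM.sqrt.trace := by
  have hNfac : (h₀.sqrt * h₁.sqrt) * (h₀.sqrt * h₁.sqrt)ᴴ = h₀.sqrt * ρ₁ * h₀.sqrt := by
    rw [conjTranspose_mul, h₀.posSemidef_sqrt.1.eq, h₁.posSemidef_sqrt.1.eq,
      show h₀.sqrt * h₁.sqrt * (h₁.sqrt * h₀.sqrt)
        = h₀.sqrt * (h₁.sqrt * h₁.sqrt) * h₀.sqrt by simp only [Matrix.mul_assoc],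
      h₁.sqrt_mul_self]
  set N := h₀.sqrt * h₁.sqrt with hN
  set W := matFun hM.1 isqF * N with hWdef
  set E := Wᴴ * W with hEdef
  have hWW : W * Wᴴ = matFun hM.1 indF := isq_factor_proj hM N hNfac
  have hPiisq : matFun hM.1 indF * matFun hM.1 isqF = matFun hM.1 isqF := by
    rw [matFun_mul]
    refine matFun_congr hM.1 fun i => ?_
    by_cases hx : hM.1.eigenvalues i = 0 <;> simp [indF, isqF, hx]
  have hPiW : matFun hM.1 indF * W = W := by
    rw [hWdef, ← Matrix.mul_assoc, hPiisq]
  have hE : E * E = E := by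
    rw [hEdef, show Wᴴ * W * (Wᴴ * W) = Wᴴ * ((W * Wᴴ) * W) by simp only [Matrix.mul_assoc],
      hWW, hPiW]
  have hEh : Eᴴ = E := by
    rw [hEdef, conjTranspose_mul, conjTranspose_conjTranspose]
  set B1 := h₁.sqrt * Wᴴ with hB1
  set B2 := h₁.sqrt * (1 - E) with hB2
  have h1 : B1ᴴ = W * h₁.sqrt := by
    rw [hB1, conjTranspose_mul, conjTranspose_conjTranspose, h₁.posSemidef_sqrt.1.eq]
  have h2 : B2ᴴ = (1 - E) * h₁.sqrt := by
    rw [hB2, conjTranspose_mul, conjTranspose_sub, conjTranspose_one, hEh,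
      h₁.posSemidef_sqrt.1.eq]
  have hproj : (1 - E) * (1 - E) = 1 - E := by
    calc (1 - E) * (1 - E) = 1 - E - E + E * E := by noncomm_ring
      _ = 1 - E := by rw [hE]; abel
  have hsum : B1 * B1ᴴ + B2 * B2ᴴ = ρ₁ := by
    calc B1 * B1ᴴ + B2 * B2ᴴ
        = h₁.sqrt * E * h₁.sqrt + h₁.sqrt * ((1 - E) * (1 - E)) * h₁.sqrt := by
          rw [h1, h2, hB1, hB2, hEdef]; simp only [Matrix.mul_assoc]
      _ = h₁.sqrt * E * h₁.sqrt + h₁.sqrt * (1 - E) * h₁.sqrt := by rw [hproj]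
      _ = h₁.sqrt * (E + (1 - E)) * h₁.sqrt := by noncomm_ring
      _ = h₁.sqrt * 1 * h₁.sqrt := by rw [add_sub_cancel]
      _ = ρ₁ := by rw [Matrix.mul_one, h₁.sqrt_mul_self]
  refine ⟨(fromCols h₀.sqrt 0).submatrix id ⇑finSumFinEquiv.symm,
    (fromCols B1 B2).submatrix id ⇑finSumFinEquiv.symm, ?_, ?_, ?_⟩
  · rw [conjTranspose_submatrix, submatrix_mul_equiv, submatrix_id_id,
      conjTranspose_fromCols_eq_fromRows_conjTranspose, fromCols_mul_fromRows,
      conjTranspose_zero, Matrix.mul_zero, add_zero, h₀.posSemidef_sqrt.1.eq,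
      h₀.sqrt_mul_self]
  · rw [conjTranspose_submatrix, submatrix_mul_equiv, submatrix_id_id,
      conjTranspose_fromCols_eq_fromRows_conjTranspose, fromCols_mul_fromRows, hsum]
  · rw [trace_mul_comm, conjTranspose_submatrix, submatrix_mul_equiv, submatrix_id_id,
      conjTranspose_fromCols_eq_fromRows_conjTranspose, fromCols_mul_fromRows,
      conjTranspose_zero, Matrix.mul_zero, add_zero, h₀.posSemidef_sqrt.1.eq]
    -- goal : (B1 * h₀.sqrt).trace = hM.sqrt.trace
    rw [hB1, trace_mul_comm,
      show h₀.sqrt * (h₁.sqrt * Wᴴ) = N * Wᴴ by rw [hN]; simp only [Matrix.mul_assoc],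
      hWdef, conjTranspose_mul, (matFun_isHermitian hM.1 isqF).eq, ← Matrix.mul_assoc,
      hNfac, base_mul_isq hM, matFun_sqF_eq_sqrt hM]

end Uhl

/-- Uhlmann's theorem: the maximum of |⟨Γ₀|Γ₁⟩|² over purifications equals the fidelity. -/
theorem uhlmann {n : ℕ} (ρ₀ ρ₁ : Matrix (Fin n) (Fin n) ℂ)
    (h₀ : ρ₀.PosSemidef) (h₁ : ρ₁.PosSemidef)
    (ht₀ : ρ₀.trace = 1) (ht₁ : ρ₁.trace = 1) :
    IsGreatest {r : ℝ | ∃ (m : ℕ) (Γ₀ Γ₁ : Fin n × Fin m → ℂ),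
        Purifies Γ₀ ρ₀ ∧ Purifies Γ₁ ρ₁ ∧ r = ‖ovlp Γ₀ Γ₁‖ ^ 2}
      (fidelity ρ₀ ρ₁ h₀ h₁) := by
  have hM : (h₀.sqrt * ρ₁ * h₀.sqrt).PosSemidef := by
    have h := h₁.mul_mul_conjTranspose_same h₀.sqrt
    rwa [h₀.posSemidef_sqrt.1] at h
  have hfid : fidelity ρ₀ ρ₁ h₀ h₁ = hM.sqrt.trace.re ^ 2 := rfl
  constructor
  · obtain ⟨C₀, C₁, hc0, hc1, htr⟩ := Uhl.witness h₀ h₁ hM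
    refine ⟨n + n, fun x => C₀ x.1 x.2, fun x => C₁ x.1 x.2,
      Uhl.purifies_of C₀ hc0 ht₀, Uhl.purifies_of C₁ hc1 ht₁, ?_⟩
    have hov : ovlp (fun x : Fin n × Fin (n + n) => C₀ x.1 x.2)
        (fun x : Fin n × Fin (n + n) => C₁ x.1 x.2) = (C₀ᴴ * C₁).trace :=
      Uhl.ovlp_eq C₀ C₁
    rw [hfid, hov, htr, Uhl.norm_of_nonneg' (Uhl.trace_nonneg hM.posSemidef_sqrt)]
  · rintro r ⟨m, Γ₀, Γ₁, hp₀, hp₁, rfl⟩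
    rw [hfid]
    have hA₀ := Uhl.factor_of_purifies hp₀
    have hA₁ := Uhl.factor_of_purifies hp₁
    have hup := Uhl.upper h₀ h₁ hM (Matrix.of fun i k => Γ₀ (i, k))
      (Matrix.of fun i k => Γ₁ (i, k)) hA₀ hA₁
    have hov : ovlp Γ₀ Γ₁ = ((Matrix.of fun i k => Γ₀ (i, k))ᴴ
        * (Matrix.of fun i k => Γ₁ (i, k))).trace :=
      Uhl.ovlp_eq (Matrix.of fun i k => Γ₀ (i, k)) (Matrix.of fun i k => Γ₁ (i, k))
    rw [hov]
    exact hup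
end
end

section
/- In the Fock (eigen)basis of U_θ = exp(−iθ n̂) with θ = 2π/M, the standard-form blocks of the partial transpose are obtained from those of the original by the index rearrangement [Ẽ_k]_{jl} = [E_{j+l−k mod M}]_{jl}. -/
open Matrix Complex Finset

noncomputable section

lemma omega_pow_M {M : ℕ} [NeZero M] :
    (Complex.exp (2 * Real.pi * Complex.I / M)) ^ (M : ℤ) = 1 := by
  have hM : (M : ℂ) ≠ 0 := Nat.cast_ne_zero.2 (NeZero.ne M)
  rw [zpow_natCast, ← Complex.exp_nat_mul]
  have : (M : ℂ) * (2 * Real.pi * Complex.I / M) = 2 * Real.pi * Complex.I := by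
    field_simp
  rw [this, Complex.exp_two_pi_mul_I]

lemma omega_zpow_congr {M : ℕ} [NeZero M] {a b : ℤ}
    (h : ((a : ZMod M) = (b : ZMod M))) :
    (Complex.exp (2 * Real.pi * Complex.I / M)) ^ a
      = (Complex.exp (2 * Real.pi * Complex.I / M)) ^ b := by
  obtain ⟨t, ht⟩ : (M : ℤ) ∣ (a - b) := by
    have : ((a - b : ℤ) : ZMod M) = 0 := by push_cast; rw [h]; ring
    exact (ZMod.intCast_zmod_eq_zero_iff_dvd _ _).1 this
  have ha : a = b + (M : ℤ) * t := by linarith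
  rw [ha, zpow_add₀ (Complex.exp_ne_zero _), _root_.zpow_mul, omega_pow_M, _root_.one_zpow, mul_one]

lemma fin_sub_val_cast {M : ℕ} [NeZero M] (a b : Fin M) :
    (((a - b).val : ℕ) : ZMod M) = (a.val : ZMod M) - (b.val : ZMod M) := by
  rw [Fin.sub_def]
  push_cast [Nat.cast_sub (le_of_lt b.isLt)]
  simp
  ring

lemma fin_natCast_val_cast {M : ℕ} [NeZero M] (n : ℕ) :
    ((((Fin.ofNat M n)).val : ℕ) : ZMod M) = (n : ZMod M) := by
  show ((n % M : ℕ) : ZMod M) = _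
  exact ZMod.natCast_mod n M

/-- In the Fock basis of U_θ, the standard-form blocks of the partial transpose are
obtained from those of the original by the index rearrangement
[Ẽ_k]_{jl} = [E_{j+l−k mod M}]_{jl}. -/
theorem partial_transpose_block_rearrangement {M N : ℕ} [NeZero M]
    (τAB : Matrix (Fin M × Fin N) (Fin M × Fin N) ℂ)
    (hsym : ∀ (k l : Fin M) (i j : Fin N),
      (Matrix.diagonal (fun j : Fin N =>
          (Complex.exp (2 * Real.pi * Complex.I / M)) ^ (-(j.val : ℤ))) *
        (Matrix.of fun i j : Fin N => τAB (k, i) (l, j)) *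
        (Matrix.diagonal (fun j : Fin N =>
          (Complex.exp (2 * Real.pi * Complex.I / M)) ^ (-(j.val : ℤ))))ᴴ) i j =
        τAB (k + 1, i) (l + 1, j))
    (E Etil : Fin M → Matrix (Fin N) (Fin N) ℂ)
    (hE : ∀ (k : Fin M) (j l : Fin N), E k j l = (1 / M : ℂ) *
        ∑ m : Fin M, ∑ n : Fin M,
          (Complex.exp (2 * Real.pi * Complex.I / M)) ^
              ((m.val : ℤ) * ((j.val : ℤ) - (k.val : ℤ)) +
               (n.val : ℤ) * ((k.val : ℤ) - (l.val : ℤ))) *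
            τAB (m, j) (n, l))
    (hEtil : ∀ (k : Fin M) (j l : Fin N), Etil k j l = (1 / M : ℂ) *
        ∑ m : Fin M, ∑ n : Fin M,
          (Complex.exp (2 * Real.pi * Complex.I / M)) ^
              ((m.val : ℤ) * ((j.val : ℤ) - (k.val : ℤ)) +
               (n.val : ℤ) * ((k.val : ℤ) - (l.val : ℤ))) *
            τAB (n, j) (m, l)) :
    ∀ (k : Fin M) (j l : Fin N),
      Etil k j l = E ((Fin.ofNat M (j.val + l.val : ℕ)) - k) j l := by
  intro k j l
  rw [hEtil, hE]
  congr 1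
  rw [Finset.sum_comm]
  refine Finset.sum_congr rfl fun a _ => Finset.sum_congr rfl fun b _ => ?_
  congr 1
  apply omega_zpow_congr
  set K : Fin M := ((Fin.ofNat M (j.val + l.val : ℕ))) - k with hKdef
  have hK : ((K.val : ℕ) : ZMod M)
      = (j.val : ZMod M) + (l.val : ZMod M) - (k.val : ZMod M) := by
    rw [hKdef, fin_sub_val_cast, fin_natCast_val_cast]; push_cast; ring
  push_cast
  linear_combination ((a.val : ZMod M) - (b.val : ZMod M)) * hK
end
end
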